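/- Zames–Falb ρ-hard IQC with a general nonnegative filter (Theorem 18, monotone case, time domain). Let n ∈ ℕ and let g : ℝⁿ → ℝ be an admissible potential with gradient ∇g. Let ρ ∈ (0,1] and let h : ℕ → ℝ satisfy h_k ≥ 0 for all k and ∑_{k=0}^{∞} ρ^{−2k} h_k ≤ 1 (the series being summable). Let y : ℕ → ℝⁿ be any sequence and set u_k = ∇g(y_k). Then for every T ∈ ℕ: ∑_{k=0}^{T} ρ^{−2k} ⟨u_k, y_k − ∑_{j=0}^{k} h_j·y_{k−j}⟩ ≥ 0. -/

import Mathlib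

open scoped RealInnerProductSpace

lemma grad_ineq {n : ℕ} (g : EuclideanSpace ℝ (Fin n) → ℝ)
    (hconv : ConvexOn ℝ Set.univ g) (hdiff : Differentiable ℝ g)
    (x z : EuclideanSpace ℝ (Fin n)) :
    g x + ⟪gradient g x, z - x⟫ ≤ g z := by
  rcases eq_or_ne z x with rfl | hne
  · simp
  set v := z - x with hv
  have hline : ∀ t : ℝ, HasDerivAt (fun t : ℝ => x + t • v) v t := by
    intro t
    simpa using ((hasDerivAt_id t).smul_const v).const_add x
  set φ : ℝ → ℝ := fun t => g (x + t • v) with hφ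
  have hφconv : ConvexOn ℝ Set.univ φ := by
    have : ConvexOn ℝ ((fun t : ℝ => x + t • v) ⁻¹' Set.univ) (g ∘ fun t : ℝ => x + t • v) := by
      apply hconv.comp_affineMap (AffineMap.mk (fun t : ℝ => x + t • v)
        (LinearMap.toSpanSingleton ℝ _ v) ?_)
      intro p w; simp [LinearMap.toSpanSingleton_apply, add_smul]; abel
    rw [hφ]; simpa [Function.comp_def] using this
  have hderiv : HasDerivAt φ ⟪gradient g x, v⟫ 0 := by
    have hgrad : HasGradientAt g (gradient g x) x := (hdiff x).hasGradientAt
    have hf : HasFDerivAt g ((InnerProductSpace.toDual ℝ _) (gradient g x)) x :=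
      hgrad.hasFDerivAt
    have hf' : HasFDerivAt g ((InnerProductSpace.toDual ℝ _) (gradient g x)) (x + (0:ℝ) • v) := by
      simpa using hf
    have := hf'.comp_hasDerivAt (0 : ℝ) (hline 0)
    rw [hφ]; simpa [InnerProductSpace.toDual_apply_apply, real_inner_comm, Function.comp_def] using this
  have := hφconv.le_slope_of_hasDerivAt (Set.mem_univ (0:ℝ)) (Set.mem_univ (1:ℝ))
    one_pos hderiv
  have h2 : slope φ 0 1 = g z - g x := by
    rw [slope_def_field]
    simp only [hφ]
    rw [one_smul, zero_smul, add_zero, hv]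
    simp
  rw [h2] at this
  linarith

/-- Theorem 18, monotone case (time domain): the Zames–Falb multiplier with a
nonnegative filter `h` satisfying `∑ ρ⁻²ᵏ hₖ ≤ 1` defines a ρ-hard IQC for the
monotone gradient nonlinearity `∇g`. -/
theorem stmt_9 {n : ℕ} (g : EuclideanSpace ℝ (Fin n) → ℝ)
    (hconv : ConvexOn ℝ Set.univ g) (hdiff : Differentiable ℝ g)
    (hnonneg : ∀ x, 0 ≤ g x) (hg0 : g 0 = 0)
    (ρ : ℝ) (hρ : ρ ∈ Set.Ioc (0 : ℝ) 1)
    (h : ℕ → ℝ) (hpos : ∀ k, 0 ≤ h k)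
    (hsum : Summable (fun k : ℕ => ρ ^ (-(2 * (k : ℤ))) * h k))
    (hsum1 : ∑' k : ℕ, ρ ^ (-(2 * (k : ℤ))) * h k ≤ 1)
    (y : ℕ → EuclideanSpace ℝ (Fin n)) (u : ℕ → EuclideanSpace ℝ (Fin n))
    (hu : ∀ k, u k = gradient g (y k)) :
    ∀ T : ℕ, 0 ≤ ∑ k ∈ Finset.range (T + 1),
      ρ ^ (-(2 * (k : ℤ))) *
        ⟪u k, y k - ∑ j ∈ Finset.range (k + 1), h j • y (k - j)⟫ := by
  intro T
  obtain ⟨hρ0, hρ1⟩ := hρ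
  set r : ℕ → ℝ := fun k => ρ ^ (-(2 * (k : ℤ))) with hrdef
  have hr0 : ∀ k, 0 < r k := fun k => zpow_pos hρ0 _
  have hr1 : ∀ k, 1 ≤ r k := by
    intro k
    have e : r k = (ρ ^ (2 * k))⁻¹ := by
      show ρ ^ (-(2 * (k : ℤ))) = _
      rw [show -(2 * (k : ℤ)) = -((2 * k : ℕ) : ℤ) by push_cast; ring, zpow_neg, zpow_natCast]
    rw [e]
    exact (one_le_inv₀ (pow_pos hρ0 _)).mpr (pow_le_one₀ hρ0.le hρ1)
  have hpartial : ∀ m : ℕ, ∑ j ∈ Finset.range m, r j * h j ≤ 1 := fun m =>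
    le_trans (Summable.sum_le_tsum (Finset.range m)
      (fun i _ => mul_nonneg (hr0 i).le (hpos i)) hsum) hsum1
  have hSk : ∀ k, ∑ j ∈ Finset.range (k + 1), h j ≤ 1 := by
    intro k
    calc ∑ j ∈ Finset.range (k + 1), h j
        ≤ ∑ j ∈ Finset.range (k + 1), r j * h j :=
          Finset.sum_le_sum fun j _ => le_mul_of_one_le_left (hpos j) (hr1 j)
      _ ≤ 1 := hpartial _
  have gi := grad_ineq g hconv hdiff
  have hgy : ∀ k, g (y k) ≤ ⟪u k, y k⟫ := by
    intro k
    have h0 := gi (y k) 0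
    rw [hg0, zero_sub, inner_neg_right] at h0
    rw [hu]
    linarith
  have hkey : ∀ k, g (y k) - ∑ j ∈ Finset.range (k + 1), h j * g (y (k - j)) ≤
      ⟪u k, y k - ∑ j ∈ Finset.range (k + 1), h j • y (k - j)⟫ := by
    intro k
    have hexp : ⟪u k, y k - ∑ j ∈ Finset.range (k + 1), h j • y (k - j)⟫ =
        ⟪u k, y k⟫ - ∑ j ∈ Finset.range (k + 1), h j * ⟪u k, y (k - j)⟫ := by
      rw [inner_sub_right, inner_sum]
      simp only [real_inner_smul_right]
    rw [hexp]
    have hterm : ∀ j ∈ Finset.range (k + 1),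
        h j * ⟪u k, y (k - j)⟫ ≤ h j * (⟪u k, y k⟫ - g (y k) + g (y (k - j))) := by
      intro j _
      refine mul_le_mul_of_nonneg_left ?_ (hpos j)
      have hg2 := gi (y k) (y (k - j))
      rw [inner_sub_right] at hg2
      rw [hu]
      linarith
    have hsumle := Finset.sum_le_sum hterm
    have hrhs : ∑ j ∈ Finset.range (k + 1), h j * (⟪u k, y k⟫ - g (y k) + g (y (k - j))) =
        (∑ j ∈ Finset.range (k + 1), h j) * (⟪u k, y k⟫ - g (y k)) +
          ∑ j ∈ Finset.range (k + 1), h j * g (y (k - j)) := by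
      rw [Finset.sum_mul, ← Finset.sum_add_distrib]
      exact Finset.sum_congr rfl fun j _ => by ring
    rw [hrhs] at hsumle
    nlinarith [hgy k, hSk k, hsumle]
  have step1 : ∑ k ∈ Finset.range (T + 1),
      r k * (g (y k) - ∑ j ∈ Finset.range (k + 1), h j * g (y (k - j))) ≤
      ∑ k ∈ Finset.range (T + 1), r k *
        ⟪u k, y k - ∑ j ∈ Finset.range (k + 1), h j • y (k - j)⟫ :=
    Finset.sum_le_sum fun k _ => mul_le_mul_of_nonneg_left (hkey k) (hr0 k).le
  refine le_trans ?_ step1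
  have expand : ∑ k ∈ Finset.range (T + 1),
      r k * (g (y k) - ∑ j ∈ Finset.range (k + 1), h j * g (y (k - j))) =
      (∑ k ∈ Finset.range (T + 1), r k * g (y k)) -
      ∑ k ∈ Finset.range (T + 1), ∑ j ∈ Finset.range (k + 1), r k * (h j * g (y (k - j))) := by
    rw [← Finset.sum_sub_distrib]
    exact Finset.sum_congr rfl fun k _ => by rw [mul_sub, Finset.mul_sum]
  rw [expand, sub_nonneg]
  set M : ℝ := ∑ k ∈ Finset.range (T + 1), r k * g (y k) with hM
  have hM0 : 0 ≤ M :=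
    Finset.sum_nonneg fun k _ => mul_nonneg (hr0 k).le (hnonneg _)
  have swap : ∑ k ∈ Finset.range (T + 1), ∑ j ∈ Finset.range (k + 1),
      r k * (h j * g (y (k - j))) =
      ∑ j ∈ Finset.range (T + 1), ∑ k ∈ Finset.Ico j (T + 1),
      r k * (h j * g (y (k - j))) := by
    apply Finset.sum_comm'
    intro k j
    simp only [Finset.mem_range, Finset.mem_Ico]
    omega
  rw [swap]
  have inner_bound : ∀ j ∈ Finset.range (T + 1),
      ∑ k ∈ Finset.Ico j (T + 1), r k * (h j * g (y (k - j))) ≤ (r j * h j) * M := by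
    intro j hj
    have split : ∀ k ∈ Finset.Ico j (T + 1),
        r k * (h j * g (y (k - j))) = (r j * h j) * (r (k - j) * g (y (k - j))) := by
      intro k hk
      rw [Finset.mem_Ico] at hk
      have : r k = r j * r (k - j) := by
        rw [hrdef, ← zpow_add₀ hρ0.ne']
        congr 1
        have : ((k - j : ℕ) : ℤ) = (k : ℤ) - j := by omega
        rw [this]; ring
      rw [this]; ring
    rw [Finset.sum_congr rfl split, ← Finset.mul_sum]
    refine mul_le_mul_of_nonneg_left ?_ (mul_nonneg (hr0 j).le (hpos j))
    have reindex : ∑ k ∈ Finset.Ico j (T + 1), r (k - j) * g (y (k - j)) =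
        ∑ i ∈ Finset.range (T + 1 - j), r i * g (y i) := by
      rw [Finset.sum_Ico_eq_sum_range]
      exact Finset.sum_congr rfl fun i _ => by
        rw [Nat.add_sub_cancel_left]
    rw [reindex, hM]
    exact Finset.sum_le_sum_of_subset_of_nonneg
      (Finset.range_subset_range.mpr (by omega))
      (fun i _ _ => mul_nonneg (hr0 i).le (hnonneg _))
  calc ∑ j ∈ Finset.range (T + 1), ∑ k ∈ Finset.Ico j (T + 1), r k * (h j * g (y (k - j)))
      ≤ ∑ j ∈ Finset.range (T + 1), (r j * h j) * M :=
        Finset.sum_le_sum inner_bound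
    _ = (∑ j ∈ Finset.range (T + 1), r j * h j) * M := by rw [Finset.sum_mul]
    _ ≤ 1 * M := mul_le_mul_of_nonneg_right (hpartial _) hM0
    _ = M := one_mul M
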